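/- Let p be a prime. In the ring ℤ_(p)[u] ⊗-localized picture: the monomials ∏_i (δ^i(u))^{d_i}, where δ(x) := (x − x^p)/p, ranging over all sequences (d_i) with 0 ≤ d_i < p for all i and d_i = 0 for all but finitely many i, form a basis of the ℤ_(p)-module Int_(p) := Int ⊗ ℤ_(p). -/

import Mathlib

open Polynomial

/-- membership in `Int_(p) = Int ⊗ ℤ_(p)` viewed inside ℚ[u]. -/
def memIntLoc (p : ℕ) (f : Polynomial ℚ) : Prop :=
  ∃ n : ℤ, ¬ (p : ℤ) ∣ n ∧ ∀ m : ℤ, ∃ k : ℤ, (n : ℚ) * f.eval (m : ℚ) = (k : ℚ)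

/-- membership in ℤ_(p) viewed inside ℚ. -/
def memZLoc (p : ℕ) (x : ℚ) : Prop :=
  ∃ a b : ℤ, ¬ (p : ℤ) ∣ b ∧ (b : ℚ) * x = (a : ℚ)

/-- δ(x) := (x − x^p)/p. -/
noncomputable def deltaOp (p : ℕ) (x : Polynomial ℚ) : Polynomial ℚ :=
  (p : ℚ)⁻¹ • (x - x ^ p)

/-- the monomial ∏ᵢ (δ^i(u))^{dᵢ}. -/
noncomputable def deltaMonomial (p : ℕ) (d : ℕ →₀ ℕ) : Polynomial ℚ :=
  d.prod fun i e => ((deltaOp p)^[i] Polynomial.X) ^ e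

section Basics
variable {p : ℕ} (hp : p.Prime)

lemma not_dvd_one_int (hp : p.Prime) : ¬ (p : ℤ) ∣ (1:ℤ) := by
  rw [show ((1:ℤ)) = ((1:ℕ):ℤ) by norm_num, Int.natCast_dvd_natCast, Nat.dvd_one]
  exact hp.one_lt.ne'

lemma prime_int (hp : p.Prime) : Prime (p : ℤ) := Nat.prime_iff_prime_int.mp hp

lemma memZLoc_int (hp : p.Prime) (k : ℤ) : memZLoc p (k : ℚ) :=
  ⟨k, 1, not_dvd_one_int hp, by push_cast; ring⟩

lemma memZLoc_mul (hp : p.Prime) {x y : ℚ} (hx : memZLoc p x) (hy : memZLoc p y) :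
    memZLoc p (x * y) := by
  obtain ⟨a1, b1, h1, e1⟩ := hx
  obtain ⟨a2, b2, h2, e2⟩ := hy
  refine ⟨a1 * a2, b1 * b2, fun h => ?_, by push_cast; rw [show ((b1:ℚ))*(b2:ℚ)*(x*y) = ((b1:ℚ)*x)*((b2:ℚ)*y) by ring, e1, e2]⟩
  rcases (prime_int hp).2.2 _ _ h with h | h
  exacts [h1 h, h2 h]

lemma memZLoc_neg {x : ℚ} (hx : memZLoc p x) : memZLoc p (-x) := by
  obtain ⟨a, b, h, e⟩ := hx
  exact ⟨-a, b, h, by push_cast; rw [show ((b:ℚ)) * -x = -((b:ℚ)*x) by ring, e]⟩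

lemma memZLoc_add (hp : p.Prime) {x y : ℚ} (hx : memZLoc p x) (hy : memZLoc p y) :
    memZLoc p (x + y) := by
  obtain ⟨a1, b1, h1, e1⟩ := hx
  obtain ⟨a2, b2, h2, e2⟩ := hy
  refine ⟨a1 * b2 + a2 * b1, b1 * b2, fun h => ?_, ?_⟩
  · rcases (prime_int hp).2.2 _ _ h with h | h
    exacts [h1 h, h2 h]
  · push_cast
    rw [show ((b1:ℚ))*(b2:ℚ)*(x+y) = ((b1:ℚ)*x)*(b2:ℚ) + ((b2:ℚ)*y)*(b1:ℚ) by ring, e1, e2]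

end Basics

section IntLoc
variable {p : ℕ}

lemma memIntLoc_one (hp : p.Prime) : memIntLoc p 1 :=
  ⟨1, not_dvd_one_int hp, fun _ => ⟨1, by simp⟩⟩

lemma memIntLoc_X (hp : p.Prime) : memIntLoc p X :=
  ⟨1, not_dvd_one_int hp, fun m => ⟨m, by simp⟩⟩

lemma memIntLoc_mul (hp : p.Prime) {f g : Polynomial ℚ} (hf : memIntLoc p f)
    (hg : memIntLoc p g) : memIntLoc p (f * g) := by
  obtain ⟨n1, h1, e1⟩ := hf
  obtain ⟨n2, h2, e2⟩ := hg
  refine ⟨n1 * n2, fun h => ?_, fun m => ?_⟩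
  · rcases (prime_int hp).2.2 _ _ h with h | h
    exacts [h1 h, h2 h]
  · obtain ⟨k1, hk1⟩ := e1 m
    obtain ⟨k2, hk2⟩ := e2 m
    exact ⟨k1 * k2, by push_cast; rw [eval_mul,
      show (n1:ℚ)*(n2:ℚ)*(eval (m:ℚ) f * eval (m:ℚ) g) = ((n1:ℚ)*eval (m:ℚ) f)*((n2:ℚ)*eval (m:ℚ) g) by ring, hk1, hk2]⟩

lemma memIntLoc_sub (hp : p.Prime) {f g : Polynomial ℚ} (hf : memIntLoc p f)
    (hg : memIntLoc p g) : memIntLoc p (f - g) := by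
  obtain ⟨n1, h1, e1⟩ := hf
  obtain ⟨n2, h2, e2⟩ := hg
  refine ⟨n1 * n2, fun h => ?_, fun m => ?_⟩
  · rcases (prime_int hp).2.2 _ _ h with h | h
    exacts [h1 h, h2 h]
  · obtain ⟨k1, hk1⟩ := e1 m
    obtain ⟨k2, hk2⟩ := e2 m
    exact ⟨n2 * k1 - n1 * k2, by push_cast; rw [eval_sub,
      show (n1:ℚ)*(n2:ℚ)*(eval (m:ℚ) f - eval (m:ℚ) g)
        = (n2:ℚ)*((n1:ℚ)*eval (m:ℚ) f) - (n1:ℚ)*((n2:ℚ)*eval (m:ℚ) g) by ring, hk1, hk2]⟩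

lemma memIntLoc_C_mul (hp : p.Prime) {a : ℚ} {f : Polynomial ℚ} (ha : memZLoc p a)
    (hf : memIntLoc p f) : memIntLoc p (C a * f) := by
  obtain ⟨a', b, hb, eb⟩ := ha
  obtain ⟨n, hn, en⟩ := hf
  refine ⟨b * n, fun h => ?_, fun m => ?_⟩
  · rcases (prime_int hp).2.2 _ _ h with h | h
    exacts [hb h, hn h]
  · obtain ⟨k, hk⟩ := en m
    exact ⟨a' * k, by push_cast; rw [eval_mul, eval_C,
      show (b:ℚ)*(n:ℚ)*(a * eval (m:ℚ) f) = ((b:ℚ)*a)*((n:ℚ)*eval (m:ℚ) f) by ring, eb, hk]⟩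

lemma fermat_aux (hp : p.Prime) {n k : ℤ} (hn : ¬ (p:ℤ) ∣ n) :
    (p:ℤ) ∣ n ^ (p - 1) * k - k ^ p := by
  haveI : Fact p.Prime := ⟨hp⟩
  rw [← ZMod.intCast_zmod_eq_zero_iff_dvd]
  push_cast
  have hn' : ((n : ZMod p)) ≠ 0 := by
    rw [Ne, ZMod.intCast_zmod_eq_zero_iff_dvd]; exact hn
  rw [ZMod.pow_card_sub_one_eq_one hn', ZMod.pow_card, one_mul, sub_self]

lemma memIntLoc_delta (hp : p.Prime) {f : Polynomial ℚ} (hf : memIntLoc p f) :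
    memIntLoc p (deltaOp p f) := by
  obtain ⟨n, hn, en⟩ := hf
  have hp0 : (p : ℚ) ≠ 0 := Nat.cast_ne_zero.mpr hp.pos.ne'
  refine ⟨n ^ p, fun h => hn ((prime_int hp).dvd_of_dvd_pow h), fun m => ?_⟩
  obtain ⟨k, hk⟩ := en m
  obtain ⟨k', hk'⟩ := fermat_aux hp (k := k) hn
  refine ⟨k', ?_⟩
  have heval : (deltaOp p f).eval (m:ℚ) = (p:ℚ)⁻¹ * (f.eval (m:ℚ) - f.eval (m:ℚ) ^ p) := by
    simp [deltaOp, eval_smul, smul_eq_mul]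
  rw [heval]
  have hq : (n:ℚ) ^ (p-1) * k - (k:ℚ) ^ p = (p:ℚ) * k' := by exact_mod_cast congrArg (Int.cast : ℤ → ℚ) hk'
  have hnp : (n:ℚ)^p = (n:ℚ)^(p-1) * n := by
    rw [← pow_succ, Nat.sub_add_cancel hp.one_lt.le]
  rw [← hk] at hq
  rw [mul_pow] at hq
  have key : (n:ℚ)^p * (f.eval (m:ℚ) - f.eval (m:ℚ) ^ p) = (p:ℚ) * k' := by
    linear_combination hq + f.eval (m:ℚ) * hnp
  push_cast
  calc (n:ℚ)^p * ((p:ℚ)⁻¹ * (f.eval (m:ℚ) - f.eval (m:ℚ) ^ p))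
      = (p:ℚ)⁻¹ * ((n:ℚ)^p * (f.eval (m:ℚ) - f.eval (m:ℚ) ^ p)) := by ring
    _ = (p:ℚ)⁻¹ * ((p:ℚ) * k') := by rw [key]
    _ = (k':ℚ) := by field_simp

lemma memIntLoc_iter (hp : p.Prime) (i : ℕ) : memIntLoc p ((deltaOp p)^[i] X) := by
  induction i with
  | zero => simpa using memIntLoc_X hp
  | succ i ih => rw [Function.iterate_succ_apply']; exact memIntLoc_delta hp ih

lemma memIntLoc_pow (hp : p.Prime) {f : Polynomial ℚ} (hf : memIntLoc p f) (e : ℕ) :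
    memIntLoc p (f ^ e) := by
  induction e with
  | zero => simpa using memIntLoc_one hp
  | succ e ih => rw [pow_succ]; exact memIntLoc_mul hp ih hf

lemma memIntLoc_deltaMonomial (hp : p.Prime) (d : ℕ →₀ ℕ) :
    memIntLoc p (deltaMonomial p d) := by
  rw [deltaMonomial, Finsupp.prod]
  refine Finset.prod_induction _ (memIntLoc p) (fun _ _ => memIntLoc_mul hp)
    (memIntLoc_one hp) (fun i _ => memIntLoc_pow hp (memIntLoc_iter hp i) _)

end IntLoc

section Degrees
variable {p : ℕ}

/-- exponent `e i` with `(p-1) * e i + 1 = p ^ i`. -/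
def eExp (p : ℕ) : ℕ → ℕ
  | 0 => 0
  | (i+1) => eExp p i * p + 1

lemma eExp_spec (hp : 1 ≤ p) (i : ℕ) : (p - 1) * eExp p i + 1 = p ^ i := by
  induction i with
  | zero => simp [eExp]
  | succ i ih =>
    have h2 : p - 1 + 1 = p := Nat.succ_pred_eq_of_pos hp
    have hpp : 1 ≤ p ^ i := Nat.one_le_pow _ _ hp
    rw [eExp, pow_succ, ← ih]
    cases' Nat.exists_eq_add_of_le hp with q hq
    subst hq
    ring_nf
    omega

lemma Dq_spec (hp : p.Prime) (i : ℕ) :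
    (((deltaOp p)^[i] X : Polynomial ℚ)).natDegree = p ^ i ∧
    ∃ ε : ℚ, ε * ε = 1 ∧
      (((deltaOp p)^[i] X : Polynomial ℚ)).leadingCoeff * (p:ℚ) ^ (eExp p i) = ε := by
  have hp0 : (p : ℚ) ≠ 0 := Nat.cast_ne_zero.mpr hp.pos.ne'
  induction i with
  | zero => exact ⟨by simp, 1, by norm_num, by simp [eExp]⟩
  | succ i ih =>
    obtain ⟨hdeg, ε, hε1, hε⟩ := ih
    set D : Polynomial ℚ := (deltaOp p)^[i] X with hD
    have hdegpow : (D ^ p).natDegree = p * p ^ i := by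
      rw [natDegree_pow, hdeg, mul_comm]
    have hlt : D.natDegree < (D ^ p).natDegree := by
      rw [hdeg, hdegpow]
      calc p ^ i = 1 * p ^ i := (one_mul _).symm
        _ < p * p ^ i := (Nat.mul_lt_mul_right (pow_pos hp.pos i)).mpr hp.one_lt
    have hsub_deg : (D - D ^ p).natDegree = p * p ^ i := by
      rw [natDegree_sub_eq_right_of_natDegree_lt hlt, hdegpow]
    have h1 : D.coeff (p * p ^ i) = 0 := coeff_eq_zero_of_natDegree_lt (hdegpow ▸ hlt)
    have h2 : (D ^ p).coeff (p * p ^ i) = D.leadingCoeff ^ p := by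
      rw [← hdegpow, ← leadingCoeff, leadingCoeff_pow]
    have hsub_lc : (D - D ^ p).leadingCoeff = -(D.leadingCoeff ^ p) := by
      rw [leadingCoeff, hsub_deg, coeff_sub, h1, h2, zero_sub]
    have hstep : (deltaOp p)^[i+1] X = C ((p:ℚ)⁻¹) * (D - D ^ p) := by
      rw [Function.iterate_succ_apply', ← hD, deltaOp, smul_eq_C_mul]
    constructor
    · rw [hstep, natDegree_C_mul (inv_ne_zero hp0), hsub_deg, pow_succ, mul_comm]
    · refine ⟨-(ε ^ p), by rw [neg_mul_neg, ← mul_pow, hε1, one_pow], ?_⟩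
      rw [hstep, leadingCoeff_mul, leadingCoeff_C, hsub_lc]
      have e1 : (p:ℚ) ^ (eExp p (i+1)) = ((p:ℚ) ^ (eExp p i)) ^ p * p := by
        rw [show eExp p (i+1) = eExp p i * p + 1 from rfl, pow_add, pow_mul, pow_one]
      rw [e1]
      calc (p:ℚ)⁻¹ * -(D.leadingCoeff ^ p) * (((p:ℚ) ^ eExp p i) ^ p * p)
          = -((D.leadingCoeff * (p:ℚ) ^ eExp p i) ^ p) * ((p:ℚ)⁻¹ * p) := by ring
        _ = -(ε ^ p) := by rw [hε, inv_mul_cancel₀ hp0, mul_one]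

lemma Dq_ne_zero (hp : p.Prime) (i : ℕ) : ((deltaOp p)^[i] X : Polynomial ℚ) ≠ 0 := by
  intro h
  have := (Dq_spec hp i).1
  rw [h, natDegree_zero] at this
  exact (pow_pos hp.pos i).ne' this.symm

/-- `val d = ∑ dᵢ pⁱ`. -/
def valF (p : ℕ) (d : ℕ →₀ ℕ) : ℕ := d.sum fun i a => a * p ^ i
/-- `E d = ∑ dᵢ eᵢ`. -/
def eF (p : ℕ) (d : ℕ →₀ ℕ) : ℕ := d.sum fun i a => a * eExp p i
/-- digit sum. -/
def sF (d : ℕ →₀ ℕ) : ℕ := d.sum fun _ a => a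

lemma deltaMonomial_natDegree (hp : p.Prime) (d : ℕ →₀ ℕ) :
    (deltaMonomial p d).natDegree = valF p d := by
  rw [deltaMonomial, Finsupp.prod, natDegree_prod _ _
    (fun i _ => pow_ne_zero _ (Dq_ne_zero hp i)), valF, Finsupp.sum]
  exact Finset.sum_congr rfl fun i _ => by rw [natDegree_pow, (Dq_spec hp i).1]

lemma deltaMonomial_ne_zero (hp : p.Prime) (d : ℕ →₀ ℕ) : deltaMonomial p d ≠ 0 := by
  rw [deltaMonomial, Finsupp.prod]
  exact Finset.prod_ne_zero_iff.mpr fun i _ => pow_ne_zero _ (Dq_ne_zero hp i)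

lemma deltaMonomial_lc (hp : p.Prime) (d : ℕ →₀ ℕ) :
    ∃ ε : ℚ, ε * ε = 1 ∧ (deltaMonomial p d).leadingCoeff * (p:ℚ) ^ (eF p d) = ε := by
  rw [deltaMonomial, Finsupp.prod, leadingCoeff_prod, eF, Finsupp.sum,
    ← Finset.prod_pow_eq_pow_sum, ← Finset.prod_mul_distrib]
  refine Finset.prod_induction _ (fun x => ∃ ε : ℚ, ε * ε = 1 ∧ x = ε) ?_ ⟨1, by norm_num, rfl⟩ ?_
  · rintro x y ⟨e1, h1, he1⟩ ⟨e2, h2, he2⟩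
    refine ⟨x * y, ?_, rfl⟩
    rw [he1, he2, show e1*e2*(e1*e2) = (e1*e1)*(e2*e2) by ring, h1, h2, one_mul]
  · intro i _
    obtain ⟨ε, hε1, hε⟩ := (Dq_spec hp i).2
    refine ⟨ε ^ (d i), ?_, ?_⟩
    · rw [← mul_pow, hε1, one_pow]
    · rw [leadingCoeff_pow, mul_comm (d i) (eExp p i), pow_mul, ← mul_pow, hε]

end Degrees

section Digits
variable {p : ℕ}

/-- the tail of a finsupp of digits. -/
noncomputable def tailF (d : ℕ →₀ ℕ) : ℕ →₀ ℕ :=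
  Finsupp.comapDomain Nat.succ d (Nat.succ_injective.injOn)

@[simp] lemma tailF_apply (d : ℕ →₀ ℕ) (i : ℕ) : tailF d i = d (i + 1) := rfl

lemma split_eq (d : ℕ →₀ ℕ) :
    d = Finsupp.single 0 (d 0) + Finsupp.mapDomain Nat.succ (tailF d) := by
  ext i
  cases i with
  | zero =>
    rw [Finsupp.add_apply, Finsupp.single_apply, if_pos rfl,
      Finsupp.mapDomain_notin_range _ _ (by simp [Nat.succ_ne_zero]), add_zero]
  | succ i =>
    rw [Finsupp.add_apply, Finsupp.single_apply, if_neg (by omega),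
      Finsupp.mapDomain_apply Nat.succ_injective, tailF_apply, zero_add]

lemma valF_add (c c' : ℕ →₀ ℕ) : valF p (c + c') = valF p c + valF p c' :=
  Finsupp.sum_add_index' (fun _ => zero_mul _) (fun _ _ _ => add_mul _ _ _)

lemma eF_add (c c' : ℕ →₀ ℕ) : eF p (c + c') = eF p c + eF p c' :=
  Finsupp.sum_add_index' (fun _ => zero_mul _) (fun _ _ _ => add_mul _ _ _)

lemma valF_single (i a : ℕ) : valF p (Finsupp.single i a) = a * p ^ i :=
  Finsupp.sum_single_index (zero_mul _)

lemma eF_single (i a : ℕ) : eF p (Finsupp.single i a) = a * eExp p i :=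
  Finsupp.sum_single_index (zero_mul _)

lemma valF_mapDomain_succ (t : ℕ →₀ ℕ) :
    valF p (Finsupp.mapDomain Nat.succ t) = p * valF p t := by
  rw [valF, Finsupp.sum_mapDomain_index (h := fun i a => a * p ^ i) (fun _ => zero_mul _) (fun _ _ _ => add_mul _ _ _),
    valF, Finsupp.mul_sum]
  exact Finsupp.sum_congr fun i _ => by rw [pow_succ]; ring

lemma eF_mapDomain_succ (t : ℕ →₀ ℕ) :
    eF p (Finsupp.mapDomain Nat.succ t) = p * eF p t + sF t := by
  rw [eF, Finsupp.sum_mapDomain_index (h := fun i a => a * eExp p i) (fun _ => zero_mul _) (fun _ _ _ => add_mul _ _ _),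
    eF, sF, Finsupp.sum, Finsupp.sum, Finsupp.sum, Finset.mul_sum, ← Finset.sum_add_distrib]
  exact Finset.sum_congr rfl fun i _ => by
    rw [show eExp p (i+1) = eExp p i * p + 1 from rfl]; ring

lemma valF_split (d : ℕ →₀ ℕ) : valF p d = d 0 + p * valF p (tailF d) := by
  conv_lhs => rw [split_eq d]
  rw [valF_add, valF_single, valF_mapDomain_succ, pow_zero, mul_one]

lemma eF_split (d : ℕ →₀ ℕ) : eF p d = p * eF p (tailF d) + sF (tailF d) := by
  conv_lhs => rw [split_eq d]
  rw [eF_add, eF_single, eF_mapDomain_succ, show eExp p 0 = 0 from rfl, mul_zero, zero_add]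

lemma valF_eq_zero {d : ℕ →₀ ℕ} (hp : 0 < p) (h : valF p d = 0) : d = 0 := by
  rw [valF, Finsupp.sum] at h
  ext i
  by_cases hi : i ∈ d.support
  · have h2 := Finset.sum_eq_zero_iff.mp h i hi
    have hpi : 0 < p ^ i := pow_pos hp i
    simp only [Finsupp.coe_zero, Pi.zero_apply]
    exact (Nat.mul_eq_zero.mp h2).resolve_right hpi.ne'
  · simp [Finsupp.notMem_support_iff.mp hi]

/-- surjectivity of valF onto ℕ over digit sequences. -/
lemma valF_surj (hp : 1 < p) : ∀ N : ℕ, ∃ d : ℕ →₀ ℕ, (∀ i, d i < p) ∧ valF p d = N := by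
  intro N
  induction N using Nat.strong_induction_on with
  | _ N ih =>
    rcases Nat.eq_zero_or_pos N with rfl | hN
    · refine ⟨0, fun i => ?_, by simp [valF]⟩
      simp only [Finsupp.coe_zero, Pi.zero_apply]; omega
    · obtain ⟨d', hd', hval⟩ := ih (N / p) (Nat.div_lt_self hN hp)
      refine ⟨Finsupp.single 0 (N % p) + Finsupp.mapDomain Nat.succ d', fun i => ?_, ?_⟩
      · cases i with
        | zero =>
          rw [Finsupp.add_apply, Finsupp.single_apply, if_pos rfl,
            Finsupp.mapDomain_notin_range _ _ (by simp [Nat.succ_ne_zero]), add_zero]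
          exact Nat.mod_lt _ (by omega)
        | succ i =>
          rw [Finsupp.add_apply, Finsupp.single_apply, if_neg (by omega),
            Finsupp.mapDomain_apply Nat.succ_injective, zero_add]
          exact hd' i
      · rw [valF_add, valF_single, valF_mapDomain_succ, hval, pow_zero, mul_one]
        exact Nat.mod_add_div N p

/-- injectivity of valF on digit sequences. -/
lemma valF_inj (hp : 1 < p) : ∀ N : ℕ, ∀ d d' : ℕ →₀ ℕ, (∀ i, d i < p) → (∀ i, d' i < p) →
    valF p d = N → valF p d' = N → d = d' := by
  intro N
  induction N using Nat.strong_induction_on with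
  | _ N ih =>
    intro d d' hd hd' hv hv'
    rcases Nat.eq_zero_or_pos N with rfl | hN
    · rw [valF_eq_zero (by omega) hv, valF_eq_zero (by omega) hv']
    · have h1 := valF_split (p := p) d
      have h2 := valF_split (p := p) d'
      rw [hv] at h1; rw [hv'] at h2
      have e1 : d 0 = N % p := by
        rw [h1, Nat.add_mul_mod_self_left, Nat.mod_eq_of_lt (hd 0)]
      have e2 : d' 0 = N % p := by
        rw [h2, Nat.add_mul_mod_self_left, Nat.mod_eq_of_lt (hd' 0)]
      have h0 : d 0 = d' 0 := by rw [e1, e2]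
      have hM : valF p (tailF d) = valF p (tailF d') := by
        refine Nat.eq_of_mul_eq_mul_left (show 0 < p by omega) ?_
        omega
      have hMval : valF p (tailF d) = N / p := by
        rw [h1, e1, Nat.add_mul_div_left _ _ (by omega : 0 < p),
          Nat.div_eq_of_lt (Nat.mod_lt _ (by omega)), zero_add]
      have htail : tailF d = tailF d' :=
        ih (valF p (tailF d)) (hMval ▸ Nat.div_lt_self hN hp) _ _
          (fun i => hd _) (fun i => hd' _) rfl hM.symm
      rw [split_eq d, split_eq d', h0, htail]

/-- Legendre inequality. -/
lemma legendre_le (hp : p.Prime) : ∀ N : ℕ, ∀ d : ℕ →₀ ℕ, (∀ i, d i < p) → valF p d = N →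
    padicValNat p (N.factorial) ≤ eF p d := by
  haveI : Fact p.Prime := ⟨hp⟩
  intro N
  induction N using Nat.strong_induction_on with
  | _ N ih =>
    intro d hd hv
    rcases Nat.eq_zero_or_pos N with rfl | hN
    · simp
    · have h1 := valF_split (p := p) d
      rw [hv] at h1
      set M := valF p (tailF d) with hM
      have hvfac : padicValNat p N.factorial = padicValNat p M.factorial + M := by
        rw [h1, add_comm (d 0) (p * M), padicValNat_factorial_mul_add M (hd 0),
          padicValNat_factorial_mul]
      -- key identity : (p-1) * eF t + sF t = valF t
      have hkey : (p - 1) * eF p (tailF d) + sF (tailF d) = M := by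
        rw [hM, valF, eF, sF, Finsupp.sum, Finsupp.sum, Finsupp.sum, Finset.mul_sum,
          ← Finset.sum_add_distrib]
        exact Finset.sum_congr rfl fun i _ => by
          rw [← eExp_spec hp.one_le i]; ring
      have hEd : eF p d = eF p (tailF d) + M := by
        have hmul : ∀ a b : ℕ, 0 < a → a * b = (a - 1) * b + b := by
          intro a b ha
          cases a with
          | zero => omega
          | succ n => rw [Nat.succ_mul]; simp
        have := hmul p (eF p (tailF d)) hp.pos
        rw [eF_split]
        omega
      have hMle : padicValNat p M.factorial ≤ eF p (tailF d) := by
        rcases Nat.eq_zero_or_pos M with hM0 | hMpos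
        · rw [hM0]; simp
        · have hlt : M < p * M := by
            calc M = 1 * M := (one_mul M).symm
              _ < p * M := (Nat.mul_lt_mul_right hMpos).mpr hp.one_lt
          exact ih M (by omega) (tailF d) (fun i => hd _) rfl
      calc padicValNat p N.factorial = padicValNat p M.factorial + M := hvfac
        _ ≤ eF p (tailF d) + M := Nat.add_le_add_right hMle M
        _ = eF p d := hEd.symm

end Digits

section FiniteDiff

/-- forward difference operator. -/
noncomputable def fdiff (f : Polynomial ℚ) : Polynomial ℚ := Polynomial.taylor 1 f - f

lemma fdiff_coeff {f : Polynomial ℚ} {k : ℕ} (hf : f.natDegree ≤ k + 1) :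
    (fdiff f).coeff k = (k + 1 : ℚ) * f.coeff (k + 1) := by
  have hh : (Polynomial.hasseDeriv k f).natDegree ≤ 1 :=
    le_trans (natDegree_hasseDeriv_le f k) (by omega)
  have hev : (Polynomial.taylor (1:ℚ) f).coeff k
      = (Polynomial.hasseDeriv k f).coeff 1 + (Polynomial.hasseDeriv k f).coeff 0 := by
    rw [taylor_coeff]
    conv_lhs => rw [eq_X_add_C_of_natDegree_le_one hh]
    simp
  rw [fdiff, coeff_sub, hev, hasseDeriv_coeff, hasseDeriv_coeff, zero_add,
    Nat.choose_self, Nat.add_comm 1 k, Nat.choose_succ_self_right]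
  push_cast
  ring

lemma fdiff_natDegree {f : Polynomial ℚ} {k : ℕ} (hf : f.natDegree ≤ k + 1) :
    (fdiff f).natDegree ≤ k := by
  rw [natDegree_le_iff_coeff_eq_zero]
  intro j hj
  have hj1 : f.natDegree ≤ j := le_trans hf hj
  have h1 : f.coeff (j + 1) = 0 := coeff_eq_zero_of_natDegree_lt (by omega)
  rw [fdiff_coeff (le_trans hf (by omega)), h1, mul_zero]

lemma fdiff_iter_eq_C {N : ℕ} : ∀ {f : Polynomial ℚ}, f.natDegree ≤ N →
    fdiff^[N] f = C ((N.factorial : ℚ) * f.coeff N) := by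
  induction N with
  | zero =>
    intro f hf
    rw [Function.iterate_zero_apply, eq_C_of_natDegree_le_zero hf]
    simp
  | succ N ih =>
    intro f hf
    rw [Function.iterate_succ_apply, ih (fdiff_natDegree hf), fdiff_coeff hf]
    congr 1
    rw [Nat.factorial_succ]
    push_cast
    ring

lemma memIntLoc_fdiff {p : ℕ} {f : Polynomial ℚ} (hf : memIntLoc p f) :
    memIntLoc p (fdiff f) := by
  obtain ⟨n, hn, en⟩ := hf
  refine ⟨n, hn, fun m => ?_⟩
  obtain ⟨k1, hk1⟩ := en (m + 1)
  obtain ⟨k2, hk2⟩ := en m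
  refine ⟨k1 - k2, ?_⟩
  rw [fdiff, eval_sub, taylor_apply, eval_comp, eval_add, eval_X, eval_C]
  push_cast at hk1 ⊢
  rw [mul_sub, hk2, ← hk1]

lemma memIntLoc_fdiff_iter {p : ℕ} (N : ℕ) {f : Polynomial ℚ} (hf : memIntLoc p f) :
    memIntLoc p (fdiff^[N] f) := by
  induction N with
  | zero => simpa using hf
  | succ N ih => rw [Function.iterate_succ_apply']; exact memIntLoc_fdiff ih

lemma memZLoc_factorial_mul_lc {p : ℕ} {f : Polynomial ℚ}
    (hf : memIntLoc p f) : memZLoc p ((f.natDegree.factorial : ℚ) * f.leadingCoeff) := by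
  have h : memIntLoc p (fdiff^[f.natDegree] f) := memIntLoc_fdiff_iter _ hf
  rw [fdiff_iter_eq_C (le_refl _)] at h
  obtain ⟨n, hn, en⟩ := h
  obtain ⟨k, hk⟩ := en 0
  rw [eval_C] at hk
  exact ⟨k, n, hn, hk⟩

end FiniteDiff

section Crux
variable {p : ℕ}

lemma memZLoc_one (hp : p.Prime) : memZLoc p (1:ℚ) := by
  simpa using memZLoc_int hp 1

lemma memZLoc_sign (hp : p.Prime) {ε : ℚ} (hε : ε * ε = 1) : memZLoc p ε := by
  rcases mul_self_eq_one_iff.mp hε with rfl | rfl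
  · exact memZLoc_one hp
  · simpa using memZLoc_neg (memZLoc_one hp)

lemma memZLoc_pow_div_factorial (hp : p.Prime) {E N : ℕ}
    (hle : padicValNat p N.factorial ≤ E) :
    memZLoc p ((p:ℚ) ^ E / (N.factorial : ℚ)) := by
  haveI : Fact p.Prime := ⟨hp⟩
  obtain ⟨b, hb⟩ : p ^ (padicValNat p N.factorial) ∣ N.factorial := pow_padicValNat_dvd
  have hbne : ¬ p ∣ b := by
    intro h
    obtain ⟨c, rfl⟩ := h
    refine pow_succ_padicValNat_not_dvd (p := p) (Nat.factorial_ne_zero N) ⟨c, ?_⟩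
    calc N.factorial = p ^ (padicValNat p N.factorial) * (p * c) := hb
      _ = p ^ (padicValNat p N.factorial + 1) * c := by rw [pow_succ]; ring
  have hb0 : b ≠ 0 := by
    intro h; rw [h, mul_zero] at hb; exact Nat.factorial_ne_zero N hb
  refine ⟨(p:ℤ) ^ (E - padicValNat p N.factorial), (b:ℤ), by rwa [Int.natCast_dvd_natCast], ?_⟩
  have hfac : (N.factorial : ℚ) = (p:ℚ) ^ (padicValNat p N.factorial) * (b:ℚ) := by exact_mod_cast hb
  have hp0 : (p:ℚ) ≠ 0 := Nat.cast_ne_zero.mpr hp.pos.ne'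
  have hpe : (p:ℚ) ^ E = (p:ℚ) ^ (E - padicValNat p N.factorial) * (p:ℚ) ^ (padicValNat p N.factorial) := by
    rw [← pow_add, Nat.sub_add_cancel hle]
  have hb0' : (b:ℚ) ≠ 0 := Nat.cast_ne_zero.mpr hb0
  rw [hfac, hpe]
  push_cast
  field_simp

lemma memZLoc_coeff_ratio (hp : p.Prime) {f : Polynomial ℚ} (hf : memIntLoc p f)
    {d : ℕ →₀ ℕ} (hd : ∀ i, d i < p) (hval : valF p d = f.natDegree) :
    memZLoc p (f.leadingCoeff / (deltaMonomial p d).leadingCoeff) := by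
  obtain ⟨ε, hε1, hε⟩ := deltaMonomial_lc hp d
  have hp0 : (p:ℚ) ≠ 0 := Nat.cast_ne_zero.mpr hp.pos.ne'
  have hε0 : ε ≠ 0 := by intro h; rw [h, mul_zero] at hε1; exact one_ne_zero hε1.symm
  have hNfac0 : ((f.natDegree.factorial : ℕ) : ℚ) ≠ 0 :=
    Nat.cast_ne_zero.mpr (Nat.factorial_ne_zero _)
  have hg : (deltaMonomial p d).leadingCoeff = ε / (p:ℚ) ^ (eF p d) :=
    (eq_div_iff (pow_ne_zero _ hp0)).mpr hε
  have key : f.leadingCoeff / (deltaMonomial p d).leadingCoeff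
      = ε * (((f.natDegree.factorial : ℕ):ℚ) * f.leadingCoeff
        * ((p:ℚ) ^ (eF p d) / ((f.natDegree.factorial : ℕ):ℚ))) := by
    rw [hg]
    field_simp
    linear_combination (-f.leadingCoeff) * hε1
  rw [key]
  exact memZLoc_mul hp (memZLoc_sign hp hε1)
    (memZLoc_mul hp (memZLoc_factorial_mul_lc hf)
      (memZLoc_pow_div_factorial hp (legendre_le hp _ d hd hval)))

end Crux

section Main
variable {p : ℕ}

lemma memZLoc_zero (hp : p.Prime) : memZLoc p (0:ℚ) := by
  simpa using memZLoc_int hp 0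

lemma exists_rep (hp : p.Prime) : ∀ n : ℕ, ∀ f : Polynomial ℚ, f.natDegree ≤ n →
    memIntLoc p f →
    ∃ c : {d : ℕ →₀ ℕ // ∀ i, d i < p} →₀ ℚ, (∀ d, memZLoc p (c d)) ∧
      f = c.sum fun d a => C a * deltaMonomial p d.1 := by
  intro n
  induction n using Nat.strong_induction_on with
  | _ n ih =>
    intro f hdeg hf
    by_cases hf0 : f = 0
    · exact ⟨0, fun d => by simpa using memZLoc_zero hp, by
        rw [Finsupp.sum_zero_index, hf0]⟩
    · obtain ⟨d, hd, hv⟩ := valF_surj hp.one_lt f.natDegree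
      have ha : memZLoc p (f.leadingCoeff / (deltaMonomial p d).leadingCoeff) :=
        memZLoc_coeff_ratio hp hf hd hv
      set g := deltaMonomial p d with hgdef
      set a := f.leadingCoeff / g.leadingCoeff with hadef
      have hg0 : g ≠ 0 := deltaMonomial_ne_zero hp d
      have hlcg : g.leadingCoeff ≠ 0 := leadingCoeff_ne_zero.mpr hg0
      have hlcf : f.leadingCoeff ≠ 0 := leadingCoeff_ne_zero.mpr hf0
      have ha0 : a ≠ 0 := div_ne_zero hlcf hlcg
      have hCg0 : C a * g ≠ 0 := mul_ne_zero (by rwa [Ne, C_eq_zero]) hg0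
      have hCgdeg : (C a * g).natDegree = f.natDegree := by
        rw [natDegree_C_mul ha0, hgdef, deltaMonomial_natDegree hp, hv]
      have hlc : (C a * g).leadingCoeff = f.leadingCoeff := by
        rw [leadingCoeff_mul, leadingCoeff_C, hadef, div_mul_cancel₀ _ hlcg]
      set f' := f - C a * g with hf'def
      have hf' : memIntLoc p f' :=
        memIntLoc_sub hp hf (memIntLoc_C_mul hp ha (memIntLoc_deltaMonomial hp d))
      by_cases h0 : f' = 0
      · refine ⟨Finsupp.single ⟨d, hd⟩ a, ?_, ?_⟩
        · intro d'
          rw [Finsupp.single_apply]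
          split
          · exact ha
          · exact memZLoc_zero hp
        · rw [Finsupp.sum_single_index (by rw [C_0, zero_mul])]
          exact (sub_eq_zero.mp h0)
      · have hdeglt : f'.degree < f.degree := by
          refine degree_sub_lt ?_ hf0 hlc.symm
          rw [degree_eq_natDegree hf0, degree_eq_natDegree hCg0, hCgdeg]
        have hlt : f'.natDegree < f.natDegree := natDegree_lt_natDegree h0 hdeglt
        obtain ⟨c', hc', hsum⟩ := ih f'.natDegree (by omega) f' (le_refl _) hf'
        refine ⟨c' + Finsupp.single ⟨d, hd⟩ a, ?_, ?_⟩
        · intro d'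
          rw [Finsupp.add_apply]
          refine memZLoc_add hp (hc' d') ?_
          rw [Finsupp.single_apply]
          split
          · exact ha
          · exact memZLoc_zero hp
        · rw [Finsupp.sum_add_index' (fun _ => by rw [C_0, zero_mul])
            (fun _ b1 b2 => by rw [C_add, add_mul]), ← hsum,
            Finsupp.sum_single_index (by rw [C_0, zero_mul])]
          rw [hf'def]
          ring

lemma rep_unique (hp : p.Prime) {c : {d : ℕ →₀ ℕ // ∀ i, d i < p} →₀ ℚ}
    (h : (c.sum fun d a => C a * deltaMonomial p d.1) = 0) : c = 0 := by
  by_contra hc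
  have hne : c.support.Nonempty := Finsupp.support_nonempty_iff.mpr hc
  obtain ⟨d0, hd0, hmax⟩ := Finset.exists_max_image c.support (fun d => valF p d.1) hne
  have hcoeff : ((c.sum fun d a => C a * deltaMonomial p d.1).coeff (valF p d0.1)) = 0 := by
    rw [h, coeff_zero]
  rw [Finsupp.sum, finset_sum_coeff, Finset.sum_eq_single d0] at hcoeff
  · rw [coeff_C_mul, show (deltaMonomial p d0.1).coeff (valF p d0.1)
        = (deltaMonomial p d0.1).leadingCoeff by
          rw [leadingCoeff, deltaMonomial_natDegree hp]] at hcoeff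
    rcases mul_eq_zero.mp hcoeff with h' | h'
    · exact (Finsupp.mem_support_iff.mp hd0) h'
    · exact (leadingCoeff_ne_zero.mpr (deltaMonomial_ne_zero hp d0.1)) h'
  · intro d' hd' hne'
    rw [coeff_C_mul, coeff_eq_zero_of_natDegree_lt, mul_zero]
    rw [deltaMonomial_natDegree hp]
    refine lt_of_le_of_ne (hmax d' hd') fun hvv => hne' ?_
    exact Subtype.ext (valF_inj hp.one_lt (valF p d0.1) d'.1 d0.1 d'.2 d0.2 hvv rfl)
  · intro h'
    exact absurd hd0 h'

end Main


/-- the monomials ∏ᵢ (δ^i(u))^{dᵢ} with 0 ≤ dᵢ < p (almost all zero)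
lie in Int_(p) and form a basis of the ℤ_(p)-module Int_(p): every element has a
unique representation as a ℤ_(p)-linear combination of them. -/
theorem stmt4 (p : ℕ) (hp : p.Prime) :
    (∀ d : {d : ℕ →₀ ℕ // ∀ i, d i < p}, memIntLoc p (deltaMonomial p d.1)) ∧
    ∀ f : Polynomial ℚ, memIntLoc p f →
      ∃! c : {d : ℕ →₀ ℕ // ∀ i, d i < p} →₀ ℚ,
        (∀ d, memZLoc p (c d)) ∧
        f = c.sum fun d a => Polynomial.C a * deltaMonomial p d.1 := by
  refine ⟨fun d => memIntLoc_deltaMonomial hp d.1, fun f hf => ?_⟩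
  obtain ⟨c, hc, hsum⟩ := exists_rep hp f.natDegree f (le_refl _) hf
  refine ⟨c, ⟨hc, hsum⟩, ?_⟩
  rintro c' ⟨hc', hsum'⟩
  have hzero : ((c' - c).sum fun d a => C a * deltaMonomial p d.1) = 0 := by
    rw [Finsupp.sum_sub_index (fun d b1 b2 => by rw [C_sub, sub_mul]), ← hsum, ← hsum',
      sub_self]
  have := rep_unique hp hzero
  rwa [sub_eq_zero] at this
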